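/- (gen is a generalisation at the term level.) For every ground type τ and every term t with t : τ, the term t is an instance of gen_τ(t): there exists a substitution θ with gen_τ(t)θ = t (for any choice of distinct fresh variables, not occurring in t, used in computing gen_τ(t)). -/

import Mathlib

/-- First-order terms over countably infinite sets of variables (ℕ)
and function symbols (ℕ). -/
inductive Term : Type where
  | var : ℕ → Term
  | app : ℕ → List Term → Term

namespace Term

/-- Applying a substitution (a mapping from variables to terms) homomorphically. -/
def subst (θ : ℕ → Term) : Term → Term
  | var v => θ v
  | app f ts => app f (ts.attach.map (fun x => x.1.subst θ))
decreasing_by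
  have := List.sizeOf_lt_of_mem x.2
  simp only [Term.app.sizeOf_spec]
  omega

/-- A term is ground if it contains no variables. -/
inductive Ground : Term → Prop where
  | app : ∀ f ts, (∀ t ∈ ts, Ground t) → Ground (app f ts)

/-- The variable `v` occurs in the term. -/
inductive Occurs (v : ℕ) : Term → Prop where
  | var : Occurs v (var v)
  | app : ∀ f ts t, t ∈ ts → Occurs v t → Occurs v (app f ts)

/-- `s` is an instance of `t` if `s = tθ` for some substitution `θ`. -/
def IsInstanceOf (s t : Term) : Prop := ∃ θ : ℕ → Term, t.subst θ = s

/-- Two terms are variants if each is an instance of the other. -/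
def Variant (s t : Term) : Prop := s.IsInstanceOf t ∧ t.IsInstanceOf s

end Term

/-- Types: type variables, the distinguished 0-ary constructors
`static`, `dynamic`, `nonvar`, and other constructors applied to types. -/
inductive Ty : Type where
  | var : ℕ → Ty
  | static : Ty
  | dynamic : Ty
  | nonvar : Ty
  | con : ℕ → List Ty → Ty

namespace Ty

/-- Applying a type substitution. -/
def subst (σ : ℕ → Ty) : Ty → Ty
  | var v => σ v
  | static => static
  | dynamic => dynamic
  | nonvar => nonvar
  | con c args => con c (args.attach.map (fun x => x.1.subst σ))
decreasing_by
  have := List.sizeOf_lt_of_mem x.2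
  simp only [Ty.con.sizeOf_spec]
  omega

/-- A type is ground if it contains no type variables. -/
inductive Ground : Ty → Prop where
  | static : Ground static
  | dynamic : Ground dynamic
  | nonvar : Ground nonvar
  | con : ∀ c args, (∀ τ ∈ args, Ground τ) → Ground (con c args)

/-- All type variables of the type are below `n`. -/
inductive VarsBelow (n : ℕ) : Ty → Prop where
  | var : ∀ v, v < n → VarsBelow n (var v)
  | static : VarsBelow n static
  | dynamic : VarsBelow n dynamic
  | nonvar : VarsBelow n nonvar
  | con : ∀ c args, (∀ τ ∈ args, VarsBelow n τ) → VarsBelow n (con c args)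

end Ty

/-- A type definition `c(V₁,…,Vₙ) → f₁(T₁¹,…) ; … ; f_k(T_k¹,…)` for an
`n`-ary type constructor: the variables are represented by `0,…,arity-1`,
the alternatives are pairs of a function symbol and the list of argument types;
the function symbols are distinct and the argument types only use
variables among `0,…,arity-1`. -/
structure TypeDef where
  arity : ℕ
  alts : List (ℕ × List Ty)
  alts_nonempty : alts ≠ []
  alts_nodup : (alts.map Prod.fst).Nodup
  vars_bound : ∀ p ∈ alts, ∀ τ ∈ p.2, Ty.VarsBelow arity τ

/-- A type system: exactly one type definition for every type constructor
other than `static`, `dynamic` and `nonvar`. -/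
structure TypeSystem where
  defs : ℕ → TypeDef

mutual
/-- The type judgement `t : τ` relative to the type system `Γ`. -/
inductive HasType (Γ : TypeSystem) : Term → Ty → Prop where
  | dyn (t : Term) : HasType Γ t .dynamic
  | stat (t : Term) : t.Ground → HasType Γ t .static
  | nv (f : ℕ) (ts : List Term) : HasType Γ (.app f ts) .nonvar
  | con (c : ℕ) (σ : ℕ → Ty) (f : ℕ) (Ts : List Ty) (ts : List Term)
      (hσ : ∀ v, (σ v).Ground)
      (hmem : (f, Ts) ∈ (Γ.defs c).alts)
      (hargs : HasTypeArgs Γ ts (Ts.map (Ty.subst σ))) :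
      HasType Γ (.app f ts) (.con c ((List.range (Γ.defs c).arity).map σ))

/-- `HasTypeArgs Γ ts τs` : the terms `ts` pointwise have the types `τs`. -/
inductive HasTypeArgs (Γ : TypeSystem) : List Term → List Ty → Prop where
  | nil : HasTypeArgs Γ [] []
  | cons {t τ ts τs} : HasType Γ t τ → HasTypeArgs Γ ts τs →
      HasTypeArgs Γ (t :: ts) (τ :: τs)
end

/-- Atoms `p(t₁,…,tₙ)` over a countably infinite set of predicate symbols (ℕ). -/
structure Atom where
  pred : ℕ
  args : List Term

namespace Atom

/-- Substitutions apply to atoms argumentwise. -/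
def subst (θ : ℕ → Term) (A : Atom) : Atom := ⟨A.pred, A.args.map (Term.subst θ)⟩

/-- `B` is an instance of `A`. -/
def IsInstanceOf (B A : Atom) : Prop := ∃ θ : ℕ → Term, A.subst θ = B

/-- Two atoms are variants if each is an instance of the other. -/
def Variant (A B : Atom) : Prop := A.IsInstanceOf B ∧ B.IsInstanceOf A

end Atom

/-- A division: a set of expressions `p(τ₁,…,τₙ)` (represented as pairs of a
predicate symbol and a list of types), with all types ground and at most one
division per predicate. -/
def IsDivision (Δ : Set (ℕ × List Ty)) : Prop :=
  (∀ d ∈ Δ, ∀ τ ∈ d.2, τ.Ground) ∧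
  (∀ d ∈ Δ, ∀ d' ∈ Δ, d.1 = d'.1 → d = d')

/-- An atom `p(t₁,…,tₙ)` is safe wrt `Δ` iff there is `p(τ₁,…,τₙ) ∈ Δ`
with `tᵢ : τᵢ` for all `i`. -/
def SafeAtom (Γ : TypeSystem) (Δ : Set (ℕ × List Ty)) (A : Atom) : Prop :=
  ∃ τs : List Ty, (A.pred, τs) ∈ Δ ∧ HasTypeArgs Γ A.args τs

mutual
/-- `Gen Γ τ t s L`: `s` is a result of the partial generalisation mapping
`gen_τ(t)`, where `L` records (in order) the fresh variables chosen. -/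
inductive Gen (Γ : TypeSystem) : Ty → Term → Term → List ℕ → Prop where
  | static (t : Term) : Gen Γ .static t t []
  | dynamic (t : Term) (v : ℕ) : Gen Γ .dynamic t (.var v) [v]
  | nonvar (f : ℕ) (ts : List Term) (vs : List ℕ) (h : vs.length = ts.length) :
      Gen Γ .nonvar (.app f ts) (.app f (vs.map Term.var)) vs
  | con (c : ℕ) (σ : ℕ → Ty) (f : ℕ) (Ts : List Ty) (ts ss : List Term) (L : List ℕ)
      (hσ : ∀ v, (σ v).Ground)
      (hmem : (f, Ts) ∈ (Γ.defs c).alts)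
      (hargs : GenArgs Γ (Ts.map (Ty.subst σ)) ts ss L) :
      Gen Γ (.con c ((List.range (Γ.defs c).arity).map σ)) (.app f ts) (.app f ss) L

/-- Pointwise generalisation of a list of terms, collecting the fresh variables. -/
inductive GenArgs (Γ : TypeSystem) : List Ty → List Term → List Term → List ℕ → Prop where
  | nil : GenArgs Γ [] [] [] []
  | cons {τ t s L τs ts ss Ls} : Gen Γ τ t s L → GenArgs Γ τs ts ss Ls →
      GenArgs Γ (τ :: τs) (t :: ts) (s :: ss) (L ++ Ls)
end



/-- `GenAtom Γ Δ A B L`: `B` is a result of `gen_Δ(A)` with fresh variables `L`. -/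
def GenAtom (Γ : TypeSystem) (Δ : Set (ℕ × List Ty)) (A B : Atom) (L : List ℕ) : Prop :=
  B.pred = A.pred ∧
  ∃ τs : List Ty, (A.pred, τs) ∈ Δ ∧ HasTypeArgs Γ A.args τs ∧
    GenArgs Γ τs A.args B.args L

namespace Term

theorem subst_app (θ : ℕ → Term) (f : ℕ) (ts : List Term) :
    Term.subst θ (Term.app f ts) = Term.app f (ts.map (Term.subst θ)) := by
  rw [Term.subst]
  simp [List.attach_map_subtype_val]

theorem subst_congr : ∀ (s : Term) (θ θ' : ℕ → Term),
    (∀ v, Occurs v s → θ v = θ' v) → s.subst θ = s.subst θ'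
  | var v, θ, θ', h => by simpa [Term.subst] using h v .var
  | app f ts, θ, θ', h => by
    rw [subst_app, subst_app]
    congr 1
    apply List.map_congr_left
    intro t ht
    exact subst_congr t θ θ' (fun v hv => h v (.app f ts t ht hv))
decreasing_by
  have := List.sizeOf_lt_of_mem ht
  simp only [Term.app.sizeOf_spec]
  omega

theorem subst_id : ∀ (t : Term), t.subst Term.var = t
  | var v => by simp [Term.subst]
  | app f ts => by
    rw [subst_app]
    congr 1
    conv_rhs => rw [← List.map_id ts]
    apply List.map_congr_left
    intro t ht
    exact subst_id t
decreasing_by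
  have := List.sizeOf_lt_of_mem ht
  simp only [Term.app.sizeOf_spec]
  omega

end Term

theorem gen_occurs {Γ : TypeSystem} {τ : Ty} {t s : Term} {L : List ℕ}
    (h : Gen Γ τ t s L) : ∀ v, Term.Occurs v s → v ∈ L ∨ Term.Occurs v t := by
  induction h using Gen.rec
    (motive_2 := fun τs ts ss L _ => ∀ v, (∃ s ∈ ss, Term.Occurs v s) →
      v ∈ L ∨ ∃ t ∈ ts, Term.Occurs v t) with
  | static t => exact fun v hv => Or.inr hv
  | dynamic t v => intro w hw; cases hw; exact Or.inl (List.mem_singleton_self _)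
  | nonvar f ts vs h =>
    intro w hw
    cases hw with
    | app _ _ u hu hw =>
      obtain ⟨x, hx, rfl⟩ := List.mem_map.mp hu
      cases hw
      exact Or.inl hx
  | con c σ f Ts ts ss L hσ hmem hargs ih =>
    intro v hv
    cases hv with
    | app _ _ u hu hw =>
      rcases ih v ⟨u, hu, hw⟩ with h | ⟨t', ht', hw'⟩
      · exact Or.inl h
      · exact Or.inr (.app f ts t' ht' hw')
  | nil =>
    rename_i v hv
    obtain ⟨s, hs, -⟩ := hv
    cases hs
  | cons h1 h2 ih1 ih2 =>
    rename_i v hv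
    obtain ⟨s', hs', hw⟩ := hv
    rcases List.mem_cons.mp hs' with rfl | hs'
    · rcases ih1 v hw with h | h
      · exact Or.inl (List.mem_append_left _ h)
      · exact Or.inr ⟨_, List.mem_cons_self, h⟩
    · rcases ih2 v ⟨s', hs', hw⟩ with h | ⟨t', ht', hw'⟩
      · exact Or.inl (List.mem_append_right _ h)
      · exact Or.inr ⟨t', List.mem_cons_of_mem _ ht', hw'⟩

theorem genArgs_occurs {Γ : TypeSystem} : ∀ {τs : List Ty} {ts ss : List Term} {L : List ℕ},
    GenArgs Γ τs ts ss L → ∀ v, (∃ s ∈ ss, Term.Occurs v s) →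
      v ∈ L ∨ ∃ t ∈ ts, Term.Occurs v t := by
  intro τs ts ss
  induction ss generalizing τs ts with
  | nil => rintro L h v ⟨s, hs, -⟩; cases hs
  | cons s0 ss ih =>
    rintro L h v ⟨s', hs', hw⟩
    cases h with
    | cons h1 h2 =>
      rcases List.mem_cons.mp hs' with rfl | hs'
      · rcases gen_occurs h1 v hw with h | h
        · exact Or.inl (List.mem_append_left _ h)
        · exact Or.inr ⟨_, List.mem_cons_self, h⟩
      · rcases ih h2 v ⟨s', hs', hw⟩ with h | ⟨t', ht', hw'⟩
        · exact Or.inl (List.mem_append_right _ h)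
        · exact Or.inr ⟨t', List.mem_cons_of_mem _ ht', hw'⟩

theorem gen_subst {Γ : TypeSystem} {τ : Ty} {t s : Term} {L : List ℕ}
    (hgen : Gen Γ τ t s L) :
    L.Nodup → (∀ v ∈ L, ¬ Term.Occurs v t) →
    ∃ θ : ℕ → Term, s.subst θ = t ∧ ∀ v ∉ L, θ v = Term.var v := by
  induction hgen using Gen.rec
    (motive_2 := fun τs ts ss L _ => L.Nodup → (∀ v ∈ L, ∀ t ∈ ts, ¬ Term.Occurs v t) →
      ∃ θ : ℕ → Term, ss.map (Term.subst θ) = ts ∧ ∀ v ∉ L, θ v = Term.var v) with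
  | static t =>
    exact fun _ _ => ⟨Term.var, Term.subst_id t, fun v _ => rfl⟩
  | dynamic t v =>
    intro _ _
    refine ⟨fun w => if w = v then t else Term.var w, by simp [Term.subst], ?_⟩
    intro w hw
    simp only [List.mem_singleton] at hw
    simp [hw]
  | nonvar f ts vs hlen =>
    intro hnd _
    refine ⟨fun w => if h : w ∈ vs then ts[vs.idxOf w]'(by
      rw [← hlen]; exact List.idxOf_lt_length_iff.mpr h) else Term.var w, ?_, ?_⟩
    · rw [Term.subst_app]
      congr 1
      rw [List.map_map]
      apply List.ext_getElem (by simpa using hlen)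
      intro i h1 h2
      have hmem : vs[i]'(by simpa using h1) ∈ vs := List.getElem_mem _
      simp only [List.getElem_map, Function.comp_apply, Term.subst, hmem, dif_pos]
      congr 1
      exact hnd.idxOf_getElem _ _
    · intro v hv
      simp [hv]
  | con c σ f Ts ts ss L hσ hmem hargs ih =>
    intro hnd hfr
    obtain ⟨θ, hθ1, hθ2⟩ := ih hnd (by
      intro v hv u hu hocc
      exact hfr v hv (.app f ts u hu hocc))
    exact ⟨θ, by rw [Term.subst_app, hθ1], hθ2⟩
  | nil => exact ⟨Term.var, rfl, fun _ _ => rfl⟩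
  | cons h1 h2 ih1 ih2 =>
    rename_i τ0 t0 s0 L0 τs0 ts0 ss0 Ls0 hnd hfr
    rw [List.nodup_append] at hnd
    obtain ⟨hnd1, hnd2, hdisj⟩ := hnd
    obtain ⟨θ1, hθ11, hθ12⟩ := ih1 hnd1 (fun v hv =>
      hfr v (List.mem_append_left _ hv) t0 (List.mem_cons_self))
    obtain ⟨θ2, hθ21, hθ22⟩ := ih2 hnd2 (fun v hv u hu =>
      hfr v (List.mem_append_right _ hv) u (List.mem_cons_of_mem _ hu))
    refine ⟨fun v => if v ∈ L0 then θ1 v else θ2 v, ?_, ?_⟩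
    · simp only [List.map_cons, List.cons.injEq]
      constructor
      · rw [← hθ11]
        apply Term.subst_congr
        intro v hv
        by_cases hL : v ∈ L0
        · simp [hL]
        · have hvt : Term.Occurs v t0 := (gen_occurs h1 v hv).resolve_left hL
          have hnl := fun hm =>
            hfr v (List.mem_append_right _ hm) _ (List.mem_cons_self) hvt
          simp [hL, hθ12 v hL, hθ22 v hnl]
      · rw [← hθ21]
        apply List.map_congr_left
        intro s' hs'
        apply Term.subst_congr
        intro v hv
        by_cases hL : v ∈ L0
        · rcases genArgs_occurs h2 v ⟨s', hs', hv⟩ with h | ⟨t', ht', hw'⟩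
          · exact absurd rfl (hdisj v hL v h)
          · exact absurd hw' (hfr v (List.mem_append_left _ hL) t'
              (List.mem_cons_of_mem _ ht'))
        · simp [hL]
    · intro v hv
      simp only [List.mem_append, not_or] at hv
      simp [hv.1, hθ22 v hv.2]

/-- **gen is a generalisation at the term level.** For every ground type `τ` and
every term `t` with `t : τ`, the term `t` is an instance of `gen_τ(t)`
(for any choice of distinct fresh variables, not occurring in `t`, used in
computing `gen_τ(t)`). -/
theorem instance_of_gen (Γ : TypeSystem) (τ : Ty) (t : Term) (hτ : τ.Ground)
    (ht : HasType Γ t τ) (s : Term) (L : List ℕ) (hgen : Gen Γ τ t s L)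
    (hnodup : L.Nodup) (hfresh : ∀ v ∈ L, ¬ Term.Occurs v t) :
    t.IsInstanceOf s := by
  obtain ⟨θ, hθ, -⟩ := gen_subst hgen hnodup hfresh
  exact ⟨θ, hθ⟩
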